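/- Let n ≥ 1, let F : ℝ^n → ℝ^m be continuous and C-convex (t·F(x) + (1−t)·F(y) − F(t·x + (1−t)·y) ∈ C for all x, y ∈ ℝ^n, t ∈ [0,1]), let Ω ⊆ ℝ^n be nonempty, closed and convex, let λ > 0 and q ∈ ℝ^n. Then the strongly convex function φ(p) := f(F(p)) + (λ/2)‖p − q‖² attains its minimum over Ω at exactly one point; i.e. there exists a unique p⁺ ∈ Ω with φ(p⁺) ≤ φ(p) for all p ∈ Ω. -/

import Mathlib

open RealInnerProductSpace

set_option maxHeartbeats 1000000 in
/-- If `F : ℝ^n → ℝ^m` is continuous and `C`-convex, `Ω` is nonempty closed convex,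
`λ > 0` and `q ∈ ℝ^n`, then the strongly convex function
`φ p = f (F p) + (λ/2) * ‖p - q‖²` has exactly one minimizer over `Ω`. -/
theorem proximal_subproblem_unique_minimizer {m : ℕ} (hm : 1 ≤ m)
    (Z : Set (EuclideanSpace ℝ (Fin m))) (hZne : Z.Nonempty) (hZcomp : IsCompact Z)
    (hZ0 : (0 : EuclideanSpace ℝ (Fin m)) ∉ Z)
    (C : Set (EuclideanSpace ℝ (Fin m)))
    (hC : C = {y : EuclideanSpace ℝ (Fin m) | ∀ z ∈ Z, 0 ≤ ⟪y, z⟫})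
    (e : EuclideanSpace ℝ (Fin m)) (he : ∀ z ∈ Z, 0 < ⟪e, z⟫)
    (f : EuclideanSpace ℝ (Fin m) → ℝ)
    (hf : ∀ y, f y = sSup ((fun z => ⟪y, z⟫ / ⟪e, z⟫) '' Z))
    {n : ℕ} (hn : 1 ≤ n) (F : EuclideanSpace ℝ (Fin n) → EuclideanSpace ℝ (Fin m))
    (hFcont : Continuous F)
    (hFconv : ∀ x y : EuclideanSpace ℝ (Fin n), ∀ t ∈ Set.Icc (0 : ℝ) 1,
      t • F x + (1 - t) • F y - F (t • x + (1 - t) • y) ∈ C)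
    (Ω : Set (EuclideanSpace ℝ (Fin n))) (hΩne : Ω.Nonempty)
    (hΩclosed : IsClosed Ω) (hΩconv : Convex ℝ Ω)
    (lam : ℝ) (hlam : 0 < lam) (q : EuclideanSpace ℝ (Fin n)) :
    ∃! pplus : EuclideanSpace ℝ (Fin n), pplus ∈ Ω ∧
      ∀ p ∈ Ω, f (F pplus) + lam / 2 * ‖pplus - q‖ ^ 2
        ≤ f (F p) + lam / 2 * ‖p - q‖ ^ 2 := by
  classical
  -- basic facts about `f`
  have hcontZ : ∀ y : EuclideanSpace ℝ (Fin m),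
      ContinuousOn (fun z => ⟪y, z⟫ / ⟪e, z⟫) Z := by
    intro y
    exact ContinuousOn.div
      (Continuous.continuousOn (continuous_const.inner continuous_id))
      (Continuous.continuousOn (continuous_const.inner continuous_id))
      (fun z hz => (he z hz).ne')
  have hbdd : ∀ y : EuclideanSpace ℝ (Fin m),
      BddAbove ((fun z => ⟪y, z⟫ / ⟪e, z⟫) '' Z) := fun y =>
    (hZcomp.image_of_continuousOn (hcontZ y)).bddAbove
  have hle : ∀ (y : EuclideanSpace ℝ (Fin m)), ∀ z ∈ Z, ⟪y, z⟫ / ⟪e, z⟫ ≤ f y := by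
    intro y z hz
    rw [hf]
    exact le_csSup (hbdd y) (Set.mem_image_of_mem _ hz)
  have hsup_le : ∀ (y : EuclideanSpace ℝ (Fin m)) (a : ℝ),
      (∀ z ∈ Z, ⟪y, z⟫ / ⟪e, z⟫ ≤ a) → f y ≤ a := by
    intro y a h
    rw [hf]
    apply csSup_le (hZne.image _)
    rintro x ⟨z, hz, rfl⟩
    exact h z hz
  -- monotonicity of f with respect to the cone C
  have hmono : ∀ y y' : EuclideanSpace ℝ (Fin m), y' - y ∈ C → f y ≤ f y' := by
    intro y y' hyy'
    rw [hC] at hyy'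
    apply hsup_le
    intro z hz
    have h1 : (0:ℝ) ≤ ⟪y' - y, z⟫ := hyy' z hz
    have h2 : ⟪y, z⟫ ≤ ⟪y', z⟫ := by
      rw [inner_sub_left] at h1; linarith
    refine le_trans ?_ (hle y' z hz)
    gcongr
    exact (he z hz).le
  -- convexity of f
  have hfconv : ∀ y₁ y₂ : EuclideanSpace ℝ (Fin m), ∀ t ∈ Set.Icc (0:ℝ) 1,
      f (t • y₁ + (1 - t) • y₂) ≤ t * f y₁ + (1 - t) * f y₂ := by
    intro y₁ y₂ t ht
    apply hsup_le
    intro z hz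
    have hez := he z hz
    have : ⟪t • y₁ + (1 - t) • y₂, z⟫ / ⟪e, z⟫
        = t * (⟪y₁, z⟫ / ⟪e, z⟫) + (1 - t) * (⟪y₂, z⟫ / ⟪e, z⟫) := by
      rw [inner_add_left, real_inner_smul_left, real_inner_smul_left]
      field_simp
    rw [this]
    have h1 := hle y₁ z hz
    have h2 := hle y₂ z hz
    have ht0 := ht.1
    have ht1 := ht.2
    nlinarith
  -- Lipschitz bound for f
  obtain ⟨M, hM0, hMb⟩ : ∃ M : ℝ, 0 ≤ M ∧ ∀ z ∈ Z, ‖z‖ / ⟪e, z⟫ ≤ M := by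
    have hcont : ContinuousOn (fun z : EuclideanSpace ℝ (Fin m) => ‖z‖ / ⟪e, z⟫) Z :=
      ContinuousOn.div (continuous_norm.continuousOn)
        (Continuous.continuousOn (continuous_const.inner continuous_id))
        (fun z hz => (he z hz).ne')
    obtain ⟨z₀, hz₀, hmax⟩ := hZcomp.exists_isMaxOn hZne hcont
    refine ⟨max 0 (‖z₀‖ / ⟪e, z₀⟫), le_max_left _ _, fun z hz => ?_⟩
    exact le_trans (hmax hz) (le_max_right _ _)
  have hflip : ∀ y₁ y₂ : EuclideanSpace ℝ (Fin m), f y₁ ≤ f y₂ + M * ‖y₁ - y₂‖ := by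
    intro y₁ y₂
    apply hsup_le
    intro z hz
    have hez := he z hz
    have key : ⟪y₁, z⟫ / ⟪e, z⟫ = ⟪y₂, z⟫ / ⟪e, z⟫ + ⟪y₁ - y₂, z⟫ / ⟪e, z⟫ := by
      rw [inner_sub_left]; field_simp; ring
    rw [key]
    have h1 := hle y₂ z hz
    have h2 : ⟪y₁ - y₂, z⟫ ≤ ‖y₁ - y₂‖ * ‖z‖ := real_inner_le_norm _ _
    have h3 : ⟪y₁ - y₂, z⟫ / ⟪e, z⟫ ≤ ‖y₁ - y₂‖ * ‖z‖ / ⟪e, z⟫ := by gcongr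
    have h4 : ‖y₁ - y₂‖ * ‖z‖ / ⟪e, z⟫ ≤ ‖y₁ - y₂‖ * M := by
      rw [mul_div_assoc]
      exact mul_le_mul_of_nonneg_left (hMb z hz) (norm_nonneg _)
    nlinarith [norm_nonneg (y₁ - y₂)]
  have hfcont : Continuous f := by
    refine (LipschitzWith.of_dist_le_mul (K := Real.toNNReal M) ?_).continuous
    intro x y
    have h1 := hflip x y
    have h2 := hflip y x
    have h3 : ‖y - x‖ = ‖x - y‖ := norm_sub_rev _ _
    rw [Real.dist_eq, dist_eq_norm, Real.coe_toNNReal M hM0, abs_sub_le_iff]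
    rw [h3] at h2
    exact ⟨by linarith, by linarith⟩
  -- the objective function
  set g : EuclideanSpace ℝ (Fin n) → ℝ := fun p => f (F p) with hg
  have hgconv : ∀ x y : EuclideanSpace ℝ (Fin n), ∀ t ∈ Set.Icc (0:ℝ) 1,
      g (t • x + (1 - t) • y) ≤ t * g x + (1 - t) * g y := by
    intro x y t ht
    calc g (t • x + (1 - t) • y)
        ≤ f (t • F x + (1 - t) • F y) := hmono _ _ (hFconv x y t ht)
      _ ≤ t * g x + (1 - t) * g y := hfconv _ _ t ht
  have hgcont : Continuous g := hfcont.comp hFcont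
  set φ : EuclideanSpace ℝ (Fin n) → ℝ := fun p => g p + lam / 2 * ‖p - q‖ ^ 2 with hφ
  have hφcont : Continuous φ := by
    apply hgcont.add
    exact (continuous_const.mul ((continuous_id.sub continuous_const).norm.pow 2))
  -- lower bound on g on the unit ball around q
  obtain ⟨B, hB⟩ : ∃ B : ℝ, ∀ x ∈ Metric.closedBall q 1, B ≤ g x := by
    obtain ⟨x₀, _, hx₀⟩ := (isCompact_closedBall q 1).exists_isMinOn
      (Metric.nonempty_closedBall.2 zero_le_one) hgcont.continuousOn
    exact ⟨g x₀, fun x hx => hx₀ hx⟩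
  -- coercivity lower bound
  have hLB : ∀ p : EuclideanSpace ℝ (Fin n), 1 ≤ ‖p - q‖ →
      lam / 2 * ‖p - q‖ ^ 2 + (B - g q) * ‖p - q‖ + g q ≤ φ p := by
    intro p hp
    set d : ℝ := ‖p - q‖ with hd
    have hd0 : 0 < d := lt_of_lt_of_le one_pos hp
    set t : ℝ := 1 / d with htdef
    have ht0 : 0 < t := by positivity
    have ht1 : t ≤ 1 := by rw [htdef]; rw [div_le_one hd0]; exact hp
    set w : EuclideanSpace ℝ (Fin n) := t • p + (1 - t) • q with hw
    have hwq : w - q = t • (p - q) := by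
      rw [hw]; module
    have hwball : w ∈ Metric.closedBall q 1 := by
      rw [Metric.mem_closedBall, dist_eq_norm, hwq, norm_smul]
      simp only [Real.norm_eq_abs, abs_of_pos ht0]
      rw [← hd, htdef]
      rw [one_div, inv_mul_cancel₀ hd0.ne']
    have h1 : g w ≤ t * g p + (1 - t) * g q := hgconv p q t ⟨ht0.le, ht1⟩
    have h2 : B ≤ g w := hB w hwball
    have htd : t * d = 1 := by rw [htdef]; field_simp
    have h3 : d * B - (d - 1) * g q ≤ g p := by
      have h4 : d * B ≤ d * (t * g p + (1 - t) * g q) := by nlinarith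
      have h5 : d * (t * g p + (1 - t) * g q) = g p + (d - 1) * g q := by
        linear_combination (g p - g q) * htd
      linarith
    have h6 : φ p = g p + lam / 2 * d ^ 2 := rfl
    rw [h6]
    linarith
  -- existence of a minimizer
  obtain ⟨p₀, hp₀⟩ := hΩne
  have hcoer : ∀ᶠ p in Filter.cocompact (EuclideanSpace ℝ (Fin n)), φ p₀ ≤ φ p := by
    have hdist : Filter.Tendsto (fun p : EuclideanSpace ℝ (Fin n) => ‖p - q‖)
        (Filter.cocompact _) Filter.atTop := by
      have := tendsto_dist_right_cocompact_atTop q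
      simpa [dist_eq_norm] using this
    have hpoly : Filter.Tendsto
        (fun d : ℝ => lam / 2 * d ^ 2 + (B - g q) * d + g q) Filter.atTop Filter.atTop := by
      apply Filter.tendsto_atTop_add_const_right
      have : Filter.Tendsto (fun d : ℝ => d * (lam / 2 * d + (B - g q)))
          Filter.atTop Filter.atTop := by
        apply Filter.Tendsto.atTop_mul_atTop₀ Filter.tendsto_id
        apply Filter.tendsto_atTop_add_const_right
        exact Filter.Tendsto.const_mul_atTop (by positivity) Filter.tendsto_id
      convert this using 2 with d
      ring
    have h1 : ∀ᶠ p in Filter.cocompact (EuclideanSpace ℝ (Fin n)),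
        φ p₀ ≤ lam / 2 * ‖p - q‖ ^ 2 + (B - g q) * ‖p - q‖ + g q :=
      hdist.eventually ((hpoly.eventually_ge_atTop (φ p₀)))
    have h2 : ∀ᶠ p in Filter.cocompact (EuclideanSpace ℝ (Fin n)), 1 ≤ ‖p - q‖ :=
      hdist.eventually (Filter.eventually_ge_atTop 1)
    filter_upwards [h1, h2] with p hp1 hp2
    exact le_trans hp1 (hLB p hp2)
  obtain ⟨pp, hppΩ, hppmin⟩ := hφcont.continuousOn.exists_isMinOn' hΩclosed hp₀
    (hcoer.filter_mono inf_le_left)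
  have hmin : ∀ p ∈ Ω, φ pp ≤ φ p := fun p hp => hppmin hp
  -- uniqueness
  refine ⟨pp, ⟨hppΩ, hmin⟩, ?_⟩
  rintro y ⟨hyΩ, hymin⟩
  by_contra hne
  have hμ : φ y = φ pp := le_antisymm (hymin pp hppΩ) (hmin y hyΩ)
  set c : EuclideanSpace ℝ (Fin n) := (1/2 : ℝ) • y + (1/2 : ℝ) • pp with hc
  have hcΩ : c ∈ Ω := hΩconv hyΩ hppΩ (by norm_num) (by norm_num) (by norm_num)
  have hgc : g c ≤ (1/2) * g y + (1/2) * g pp := by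
    have h12 : (1:ℝ) - 1/2 = 1/2 := by norm_num
    have h := hgconv y pp (1/2) ⟨by norm_num, by norm_num⟩
    rw [h12] at h
    rw [← hc] at h
    exact h
  have hnorm : ‖c - q‖ ^ 2
      = (1/2) * ‖y - q‖ ^ 2 + (1/2) * ‖pp - q‖ ^ 2 - (1/4) * ‖y - pp‖ ^ 2 := by
    have hcq : c - q = (1/2 : ℝ) • ((y - q) + (pp - q)) := by rw [hc]; module
    have hyp : y - pp = (y - q) - (pp - q) := by module
    have hpar := parallelogram_law_with_norm ℝ (y - q) (pp - q)
    rw [hcq, norm_smul, hyp]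
    simp only [Real.norm_eq_abs]
    rw [abs_of_pos (by norm_num : (0:ℝ) < 1/2)]
    linear_combination (1/4 : ℝ) * hpar
  have hyppos : 0 < ‖y - pp‖ := by
    rw [norm_pos_iff]
    intro h
    exact hne (by rwa [sub_eq_zero] at h)
  have hφc : φ c < φ pp := by
    have e1 : φ c = g c + lam / 2 * ‖c - q‖ ^ 2 := rfl
    have e2 : φ y = g y + lam / 2 * ‖y - q‖ ^ 2 := rfl
    have e3 : φ pp = g pp + lam / 2 * ‖pp - q‖ ^ 2 := rfl
    have hsum : g y + lam / 2 * ‖y - q‖ ^ 2 = g pp + lam / 2 * ‖pp - q‖ ^ 2 := by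
      rw [← e2, ← e3]; exact hμ
    rw [e1, e3, hnorm]
    nlinarith [mul_pos hlam (pow_pos hyppos 2), hgc, hsum]
  exact absurd (hmin c hcΩ) (not_le.mpr hφc)
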